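/- Let μ, ε ∈ {−1,1}, let U ⊆ ℝ³ be open (coordinates indexed by 0,1,2, where the 0-th coordinate plays the role of time and ∂_m denotes the partial derivative in the m-th coordinate). Let ψ_0 : U → ℂ be C¹, ψ_1, ψ_2 : U → ℂ be C², A_0, A_1, A_2 : U → ℝ be C¹, and ζ_1, ζ_2 : U → ℝ be C¹. Write D_j φ = ∂_j φ + i A_j φ and q_{lm} = μ Im(ψ_l · conj(ψ_m)). Assume that on U: (i) D_l ψ_m = D_m ψ_l for all l, m ∈ {0,1,2}; (ii) ∂_l A_m − ∂_m A_l = q_{lm} for all l, m ∈ {0,1,2}; and (iii) ψ_0 = i(D_1 ψ_1 + ε D_2 ψ_2) + ζ_2 ψ_1 − ε ζ_1 ψ_2. Then for m = 1, 2 one has on U: ∂_0 ψ_m − i(∂_1∂_1 + ε ∂_2∂_2) ψ_m = (ζ_2 − 2A_1) ∂_1 ψ_m − ε (ζ_1 + 2A_2) ∂_2 ψ_m − q_{m1} ψ_1 − ε q_{m2} ψ_2 + ψ_1 ∂_m ζ_2 − ε ψ_2 ∂_m ζ_1 + ψ_m (−∂_1 A_1 − ε ∂_2 A_2 − i A_1²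 − i ε A_2² + i ζ_2 A_1 − i ε ζ_1 A_2 − i A_0). -/

import Mathlib

noncomputable section

/-- Partial derivative in the `m`-th coordinate of a `ℂ`-valued map on `ℝ³`. -/
def pdC (m : Fin 3) (f : (Fin 3 → ℝ) → ℂ) (x : Fin 3 → ℝ) : ℂ :=
  fderiv ℝ f x (Pi.single m 1)

/-- Partial derivative in the `m`-th coordinate of a real-valued map on `ℝ³`. -/
def pdR (m : Fin 3) (f : (Fin 3 → ℝ) → ℝ) (x : Fin 3 → ℝ) : ℝ :=
  fderiv ℝ f x (Pi.single m 1)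

lemma pdC_congr {m : Fin 3} {f g : (Fin 3 → ℝ) → ℂ} {x : Fin 3 → ℝ}
    (h : f =ᶠ[nhds x] g) : pdC m f x = pdC m g x := by
  unfold pdC
  rw [h.fderiv_eq]

lemma pdC_diffAt {U : Set (Fin 3 → ℝ)} (hU : IsOpen U) {f : (Fin 3 → ℝ) → ℂ}
    (hf : ContDiffOn ℝ 2 f U) {x : Fin 3 → ℝ} (hx : x ∈ U) (l : Fin 3) :
    DifferentiableAt ℝ (pdC l f) x := by
  have hfd1 : ContDiffOn ℝ 1 (fderiv ℝ f) U := hf.fderiv_of_isOpen hU le_rfl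
  have hdiff : DifferentiableAt ℝ (fderiv ℝ f) x :=
    (hfd1.differentiableOn one_ne_zero).differentiableAt (hU.mem_nhds hx)
  exact (ContinuousLinearMap.apply ℝ ℂ (Pi.single l 1)).differentiableAt.comp x hdiff

lemma pdC_symm {U : Set (Fin 3 → ℝ)} (hU : IsOpen U) {f : (Fin 3 → ℝ) → ℂ}
    (hf : ContDiffOn ℝ 2 f U) {x : Fin 3 → ℝ} (hx : x ∈ U) (l m : Fin 3) :
    pdC l (pdC m f) x = pdC m (pdC l f) x := by
  have hmem : U ∈ nhds x := hU.mem_nhds hx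
  have hfd1 : ContDiffOn ℝ 1 (fderiv ℝ f) U := hf.fderiv_of_isOpen hU le_rfl
  have hdiff : DifferentiableAt ℝ (fderiv ℝ f) x :=
    (hfd1.differentiableOn one_ne_zero).differentiableAt hmem
  have hev : ∀ᶠ y in nhds x, HasFDerivAt f (fderiv ℝ f y) y := by
    filter_upwards [hU.eventually_mem hx] with y hy
    exact ((hf.differentiableOn two_ne_zero).differentiableAt (hU.mem_nhds hy)).hasFDerivAt
  have hsymm := second_derivative_symmetric_of_eventually hev hdiff.hasFDerivAt
  have key : ∀ v w : Fin 3 → ℝ,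
      fderiv ℝ (fun y => fderiv ℝ f y v) x w = fderiv ℝ (fderiv ℝ f) x w v := by
    intro v w
    have h1 : HasFDerivAt (fun y => fderiv ℝ f y v)
        ((ContinuousLinearMap.apply ℝ ℂ v).comp (fderiv ℝ (fderiv ℝ f) x)) x :=
      (ContinuousLinearMap.apply ℝ ℂ v).hasFDerivAt.comp x hdiff.hasFDerivAt
    rw [h1.fderiv]
    rfl
  unfold pdC
  rw [key, key, hsymm]

lemma pdC_comb {x : Fin 3 → ℝ} (k : Fin 3) (ε : ℝ)
    (f1 f2 g1 g2 : (Fin 3 → ℝ) → ℂ) (a1 a2 z1 z2 : (Fin 3 → ℝ) → ℝ)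
    (hf1 : DifferentiableAt ℝ f1 x) (hf2 : DifferentiableAt ℝ f2 x)
    (hg1 : DifferentiableAt ℝ g1 x) (hg2 : DifferentiableAt ℝ g2 x)
    (ha1 : DifferentiableAt ℝ a1 x) (ha2 : DifferentiableAt ℝ a2 x)
    (hz1 : DifferentiableAt ℝ z1 x) (hz2 : DifferentiableAt ℝ z2 x) :
    pdC k (fun y => Complex.I * ((f1 y + Complex.I * (a1 y : ℂ) * g1 y)
        + (ε : ℂ) * (f2 y + Complex.I * (a2 y : ℂ) * g2 y))
        + (z2 y : ℂ) * g1 y - (ε : ℂ) * (z1 y : ℂ) * g2 y) x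
    = Complex.I * ((pdC k f1 x
          + Complex.I * ((pdR k a1 x : ℂ) * g1 x + (a1 x : ℂ) * pdC k g1 x))
        + (ε : ℂ) * (pdC k f2 x
          + Complex.I * ((pdR k a2 x : ℂ) * g2 x + (a2 x : ℂ) * pdC k g2 x)))
        + ((pdR k z2 x : ℂ) * g1 x + (z2 x : ℂ) * pdC k g1 x)
        - (ε : ℂ) * ((pdR k z1 x : ℂ) * g2 x + (z1 x : ℂ) * pdC k g2 x) := by
  have Ha1 : HasFDerivAt (fun y => ((a1 y : ℝ) : ℂ))
      (Complex.ofRealCLM.comp (fderiv ℝ a1 x)) x :=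
    Complex.ofRealCLM.hasFDerivAt.comp x ha1.hasFDerivAt
  have Ha2 : HasFDerivAt (fun y => ((a2 y : ℝ) : ℂ))
      (Complex.ofRealCLM.comp (fderiv ℝ a2 x)) x :=
    Complex.ofRealCLM.hasFDerivAt.comp x ha2.hasFDerivAt
  have Hz1 : HasFDerivAt (fun y => ((z1 y : ℝ) : ℂ))
      (Complex.ofRealCLM.comp (fderiv ℝ z1 x)) x :=
    Complex.ofRealCLM.hasFDerivAt.comp x hz1.hasFDerivAt
  have Hz2 : HasFDerivAt (fun y => ((z2 y : ℝ) : ℂ))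
      (Complex.ofRealCLM.comp (fderiv ℝ z2 x)) x :=
    Complex.ofRealCLM.hasFDerivAt.comp x hz2.hasFDerivAt
  have T1 := (Ha1.const_mul Complex.I).mul hg1.hasFDerivAt
  have T2 := (Ha2.const_mul Complex.I).mul hg2.hasFDerivAt
  have S1 := hf1.hasFDerivAt.add T1
  have S2 := (hf2.hasFDerivAt.add T2).const_mul (ε : ℂ)
  have SI := (S1.add S2).const_mul Complex.I
  have U2 := Hz2.mul hg1.hasFDerivAt
  have U1 := (Hz1.const_mul (ε : ℂ)).mul hg2.hasFDerivAt
  have total := (SI.add U2).sub U1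
  unfold pdC pdR
  erw [total.fderiv]
  simp only [ContinuousLinearMap.add_apply, ContinuousLinearMap.coe_sub',
    Pi.sub_apply, ContinuousLinearMap.smul_apply, ContinuousLinearMap.coe_comp',
    Function.comp_apply, Complex.ofRealCLM_apply, smul_eq_mul]
  ring

lemma pdC_comb2 {x : Fin 3 → ℝ} (k : Fin 3)
    (f g1 g2 : (Fin 3 → ℝ) → ℂ) (a b : (Fin 3 → ℝ) → ℝ)
    (hf : DifferentiableAt ℝ f x)
    (hg1 : DifferentiableAt ℝ g1 x) (hg2 : DifferentiableAt ℝ g2 x)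
    (ha : DifferentiableAt ℝ a x) (hb : DifferentiableAt ℝ b x) :
    pdC k (fun y => f y + Complex.I * (a y : ℂ) * g1 y - Complex.I * (b y : ℂ) * g2 y) x
    = pdC k f x + Complex.I * ((pdR k a x : ℂ) * g1 x + (a x : ℂ) * pdC k g1 x)
      - Complex.I * ((pdR k b x : ℂ) * g2 x + (b x : ℂ) * pdC k g2 x) := by
  have Ha : HasFDerivAt (fun y => ((a y : ℝ) : ℂ))
      (Complex.ofRealCLM.comp (fderiv ℝ a x)) x :=
    Complex.ofRealCLM.hasFDerivAt.comp x ha.hasFDerivAt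
  have Hb : HasFDerivAt (fun y => ((b y : ℝ) : ℂ))
      (Complex.ofRealCLM.comp (fderiv ℝ b x)) x :=
    Complex.ofRealCLM.hasFDerivAt.comp x hb.hasFDerivAt
  have T1 := (Ha.const_mul Complex.I).mul hg1.hasFDerivAt
  have T2 := (Hb.const_mul Complex.I).mul hg2.hasFDerivAt
  have total := (hf.hasFDerivAt.add T1).sub T2
  unfold pdC pdR
  erw [total.fderiv]
  simp only [ContinuousLinearMap.add_apply, ContinuousLinearMap.coe_sub',
    Pi.sub_apply, ContinuousLinearMap.smul_apply, ContinuousLinearMap.coe_comp',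
    Function.comp_apply, Complex.ofRealCLM_apply, smul_eq_mul]
  ring

theorem stmt11 (μ ε : ℝ) (hμ : μ = 1 ∨ μ = -1) (hε : ε = 1 ∨ ε = -1)
    (U : Set (Fin 3 → ℝ)) (hU : IsOpen U)
    (ψ : Fin 3 → (Fin 3 → ℝ) → ℂ)
    (hψ0 : ContDiffOn ℝ 1 (ψ 0) U)
    (hψ1 : ContDiffOn ℝ 2 (ψ 1) U) (hψ2 : ContDiffOn ℝ 2 (ψ 2) U)
    (A : Fin 3 → (Fin 3 → ℝ) → ℝ) (hA : ∀ m, ContDiffOn ℝ 1 (A m) U)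
    (ζ1 ζ2 : (Fin 3 → ℝ) → ℝ) (hζ1 : ContDiffOn ℝ 1 ζ1 U) (hζ2 : ContDiffOn ℝ 1 ζ2 U)
    (q : Fin 3 → Fin 3 → (Fin 3 → ℝ) → ℝ)
    (hq : ∀ l m x, q l m x = μ * (ψ l x * (starRingEnd ℂ) (ψ m x)).im)
    -- (i) the curl relations `D_l ψ_m = D_m ψ_l`
    (hcurl : ∀ l m : Fin 3, ∀ x ∈ U,
      pdC l (ψ m) x + Complex.I * (A l x : ℂ) * ψ m x =
      pdC m (ψ l) x + Complex.I * (A m x : ℂ) * ψ l x)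
    -- (ii) the curvature relations `∂_l A_m − ∂_m A_l = q_{lm}`
    (hcurv : ∀ l m : Fin 3, ∀ x ∈ U, pdR l (A m) x - pdR m (A l) x = q l m x)
    -- (iii) the formula for `ψ_0`
    (hψ0eq : ∀ x ∈ U,
      ψ 0 x = Complex.I * ((pdC 1 (ψ 1) x + Complex.I * (A 1 x : ℂ) * ψ 1 x)
          + (ε : ℂ) * (pdC 2 (ψ 2) x + Complex.I * (A 2 x : ℂ) * ψ 2 x))
        + (ζ2 x : ℂ) * ψ 1 x - (ε : ℂ) * (ζ1 x : ℂ) * ψ 2 x) :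
    ∀ m : Fin 3, m = 1 ∨ m = 2 → ∀ x ∈ U,
      pdC 0 (ψ m) x
          - Complex.I * (pdC 1 (pdC 1 (ψ m)) x + (ε : ℂ) * pdC 2 (pdC 2 (ψ m)) x) =
        ((ζ2 x - 2 * A 1 x : ℝ) : ℂ) * pdC 1 (ψ m) x
        - (ε : ℂ) * ((ζ1 x + 2 * A 2 x : ℝ) : ℂ) * pdC 2 (ψ m) x
        - (q m 1 x : ℂ) * ψ 1 x - (ε : ℂ) * (q m 2 x : ℂ) * ψ 2 x
        + ψ 1 x * (pdR m ζ2 x : ℂ) - (ε : ℂ) * ψ 2 x * (pdR m ζ1 x : ℂ)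
        + ψ m x * (-(pdR 1 (A 1) x : ℂ) - (ε : ℂ) * (pdR 2 (A 2) x : ℂ)
            - Complex.I * (A 1 x : ℂ) ^ 2 - Complex.I * (ε : ℂ) * (A 2 x : ℂ) ^ 2
            + Complex.I * (ζ2 x : ℂ) * (A 1 x : ℂ)
            - Complex.I * (ε : ℂ) * (ζ1 x : ℂ) * (A 2 x : ℂ)
            - Complex.I * (A 0 x : ℂ)) := by
  intro m hm x hx
  have hmem : U ∈ nhds x := hU.mem_nhds hx
  -- differentiability facts at x
  have dψ1 : DifferentiableAt ℝ (ψ 1) x :=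
    (hψ1.differentiableOn two_ne_zero).differentiableAt hmem
  have dψ2 : DifferentiableAt ℝ (ψ 2) x :=
    (hψ2.differentiableOn two_ne_zero).differentiableAt hmem
  have dA : ∀ l, DifferentiableAt ℝ (A l) x := fun l =>
    ((hA l).differentiableOn one_ne_zero).differentiableAt hmem
  have dζ1 : DifferentiableAt ℝ ζ1 x := (hζ1.differentiableOn one_ne_zero).differentiableAt hmem
  have dζ2 : DifferentiableAt ℝ ζ2 x := (hζ2.differentiableOn one_ne_zero).differentiableAt hmem
  have dp1 : ∀ l, DifferentiableAt ℝ (pdC l (ψ 1)) x := fun l => pdC_diffAt hU hψ1 hx l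
  have dp2 : ∀ l, DifferentiableAt ℝ (pdC l (ψ 2)) x := fun l => pdC_diffAt hU hψ2 hx l
  -- step B functional congruence: ψ 0 agrees with the explicit formula near x
  have hev0 : (ψ 0) =ᶠ[nhds x] (fun y =>
      Complex.I * ((pdC 1 (ψ 1) y + Complex.I * (A 1 y : ℂ) * ψ 1 y)
          + (ε : ℂ) * (pdC 2 (ψ 2) y + Complex.I * (A 2 y : ℂ) * ψ 2 y))
        + (ζ2 y : ℂ) * ψ 1 y - (ε : ℂ) * (ζ1 y : ℂ) * ψ 2 y) := by
    filter_upwards [hU.eventually_mem hx] with y hy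
    exact hψ0eq y hy
  -- curl rearranged : pdC 1 (ψ 2) agrees with explicit formula near x
  have hev12 : (pdC 1 (ψ 2)) =ᶠ[nhds x] (fun y =>
      pdC 2 (ψ 1) y + Complex.I * (A 2 y : ℂ) * ψ 1 y - Complex.I * (A 1 y : ℂ) * ψ 2 y) := by
    filter_upwards [hU.eventually_mem hx] with y hy
    have := hcurl 1 2 y hy
    linear_combination this
  have hev21 : (pdC 2 (ψ 1)) =ᶠ[nhds x] (fun y =>
      pdC 1 (ψ 2) y + Complex.I * (A 1 y : ℂ) * ψ 2 y - Complex.I * (A 2 y : ℂ) * ψ 1 y) := by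
    filter_upwards [hU.eventually_mem hx] with y hy
    have := hcurl 1 2 y hy
    linear_combination -this
  have h5 := hψ0eq x hx
  have h6 := hcurl 1 2 x hx
  rcases hm with rfl | rfl
  · -- m = 1
    have h1 := hcurl 0 1 x hx
    have h2 : pdC 1 (ψ 0) x = _ := (pdC_congr hev0).trans
      (pdC_comb 1 ε (pdC 1 (ψ 1)) (pdC 2 (ψ 2)) (ψ 1) (ψ 2) (A 1) (A 2) ζ1 ζ2
        (dp1 1) (dp2 2) dψ1 dψ2 (dA 1) (dA 2) dζ1 dζ2)
    have h3 : pdC 1 (pdC 2 (ψ 2)) x = pdC 2 (pdC 1 (ψ 2)) x := pdC_symm hU hψ2 hx 1 2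
    have h4 : pdC 2 (pdC 1 (ψ 2)) x = _ := (pdC_congr hev12).trans
      (pdC_comb2 2 (pdC 2 (ψ 1)) (ψ 1) (ψ 2) (A 2) (A 1)
        (dp1 2) dψ1 dψ2 (dA 2) (dA 1))
    have h7 := hcurv 1 2 x hx
    have h7c : ((pdR 1 (A 2) x : ℝ) : ℂ) - ((pdR 2 (A 1) x : ℝ) : ℂ) = ((q 1 2 x : ℝ) : ℂ) := by
      exact_mod_cast congrArg (Complex.ofReal) h7
    have h8 : ((q 1 1 x : ℝ) : ℂ) = 0 := by
      rw [hq 1 1 x]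
      simp [Complex.mul_conj]
    push_cast
    push_cast at h7c
    linear_combination h1 + h2 + Complex.I * (ε : ℂ) * h3 + Complex.I * (ε : ℂ) * h4
      + Complex.I * ((A 1 x : ℝ) : ℂ) * h5
      - (ε : ℂ) * (((A 2 x : ℝ) : ℂ) + ((ζ1 x : ℝ) : ℂ)) * h6
      - (ε : ℂ) * (ψ 2 x) * h7c + (ψ 1 x) * h8
      + (2 * ((A 1 x : ℝ) : ℂ) * pdC 1 (ψ 1) x
        + (ε : ℂ) * ((A 2 x : ℝ) : ℂ) * pdC 2 (ψ 1) x
        + (ε : ℂ) * ((A 2 x : ℝ) : ℂ) * pdC 1 (ψ 2) x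
        + ((pdR 1 (A 1) x : ℝ) : ℂ) * ψ 1 x
        + (ε : ℂ) * (((pdR 1 (A 2) x : ℝ) : ℂ) - ((pdR 2 (A 1) x : ℝ) : ℂ)) * ψ 2 x
        + (ε : ℂ) * ((pdR 2 (A 2) x : ℝ) : ℂ) * ψ 1 x
        + Complex.I * ((A 1 x : ℝ) : ℂ) ^ 2 * ψ 1 x
        + Complex.I * (ε : ℂ) * ((A 1 x : ℝ) : ℂ) * ((A 2 x : ℝ) : ℂ) * ψ 2 x)
          * Complex.I_sq
  · -- m = 2
    have h1 := hcurl 0 2 x hx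
    have h2 : pdC 2 (ψ 0) x = _ := (pdC_congr hev0).trans
      (pdC_comb 2 ε (pdC 1 (ψ 1)) (pdC 2 (ψ 2)) (ψ 1) (ψ 2) (A 1) (A 2) ζ1 ζ2
        (dp1 1) (dp2 2) dψ1 dψ2 (dA 1) (dA 2) dζ1 dζ2)
    have h3 : pdC 2 (pdC 1 (ψ 1)) x = pdC 1 (pdC 2 (ψ 1)) x := pdC_symm hU hψ1 hx 2 1
    have h4 : pdC 1 (pdC 2 (ψ 1)) x = _ := (pdC_congr hev21).trans
      (pdC_comb2 1 (pdC 1 (ψ 2)) (ψ 2) (ψ 1) (A 1) (A 2)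
        (dp2 1) dψ2 dψ1 (dA 1) (dA 2))
    have h7 := hcurv 2 1 x hx
    have h7c : ((pdR 2 (A 1) x : ℝ) : ℂ) - ((pdR 1 (A 2) x : ℝ) : ℂ) = ((q 2 1 x : ℝ) : ℂ) := by
      exact_mod_cast congrArg (Complex.ofReal) h7
    have h8 : ((q 2 2 x : ℝ) : ℂ) = 0 := by
      rw [hq 2 2 x]
      simp [Complex.mul_conj]
    push_cast
    push_cast at h7c
    linear_combination h1 + h2 + Complex.I * h3 + Complex.I * h4
      + Complex.I * ((A 2 x : ℝ) : ℂ) * h5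
      + (((A 1 x : ℝ) : ℂ) - ((ζ2 x : ℝ) : ℂ)) * h6
      - (ψ 1 x) * h7c + (ε : ℂ) * (ψ 2 x) * h8
      + (((A 1 x : ℝ) : ℂ) * pdC 2 (ψ 1) x
        + ((A 1 x : ℝ) : ℂ) * pdC 1 (ψ 2) x
        + 2 * (ε : ℂ) * ((A 2 x : ℝ) : ℂ) * pdC 2 (ψ 2) x
        + ((pdR 1 (A 1) x : ℝ) : ℂ) * ψ 2 x
        + (((pdR 2 (A 1) x : ℝ) : ℂ) - ((pdR 1 (A 2) x : ℝ) : ℂ)) * ψ 1 x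
        + (ε : ℂ) * ((pdR 2 (A 2) x : ℝ) : ℂ) * ψ 2 x
        + Complex.I * ((A 1 x : ℝ) : ℂ) * ((A 2 x : ℝ) : ℂ) * ψ 1 x
        + Complex.I * (ε : ℂ) * ((A 2 x : ℝ) : ℂ) ^ 2 * ψ 2 x)
          * Complex.I_sq
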